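/- Let Q > 0 and t₁ be real numbers, and define ψ : ℝ × ℝ → ℝ by ψ(t,x) = (Q(t₁ - t) + 1)^{-1/2} · exp(-Q (log x)² / (2(Q(t₁ - t) + 1))). Then for every t ≤ t₁ and every x > 0, ψ satisfies the linear backward equation ∂_t ψ(t,x) + (x/2) ∂_x ψ(t,x) + (1/2) x² ∂_{xx} ψ(t,x) = 0, together with the boundary condition ψ(t₁, x) = exp(-(Q/2)(log x)²). -/

import Mathlib

/-- Exponentiated negative cost-to-go `ψ = e^{-J}` of the geometric Brownian motion
control problem. -/
noncomputable def gbmPsi (Q t₁ : ℝ) : ℝ × ℝ → ℝ := fun p =>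
  (Q * (t₁ - p.1) + 1) ^ (-(1 / 2 : ℝ)) *
    Real.exp (-(Q * (Real.log p.2) ^ 2) / (2 * (Q * (t₁ - p.1) + 1)))

/-- Spatial derivative of `ψ`: for `y > 0`,
`∂ₓψ(t,y) = ψ(t,y) · (-Q log y)/((Q(t₁-t)+1) y)`. -/
lemma gbm_psi_x (Q t₁ t : ℝ) (ha : 0 < Q * (t₁ - t) + 1) {y : ℝ} (hy : 0 < y) :
    HasDerivAt (fun y => gbmPsi Q t₁ (t, y))
      (gbmPsi Q t₁ (t, y) * (-(Q * Real.log y) / ((Q * (t₁ - t) + 1) * y))) y := by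
  have hlog := Real.hasDerivAt_log hy.ne'
  have h1 : HasDerivAt (fun y : ℝ => -(Q * (Real.log y)^2) / (2 * (Q * (t₁ - t) + 1)))
      (-(Q * ((2:ℕ) * Real.log y ^ (2-1) * y⁻¹)) / (2 * (Q * (t₁ - t) + 1))) y :=
    (((hlog.pow 2).const_mul Q).neg).div_const _
  have h2 := (h1.exp).const_mul ((Q * (t₁ - t) + 1) ^ (-(1 / 2 : ℝ)))
  convert h2 using 1
  · rfl
  · rfl
  · rfl
  simp only [gbmPsi]
  push_cast
  field_simp

/-- Time derivative of `ψ` (raw combinator form). -/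
lemma gbm_psi_t (Q t₁ t x : ℝ) (ha : 0 < Q * (t₁ - t) + 1) :
    HasDerivAt (fun s => gbmPsi Q t₁ (s, x))
      ((-Q * -(1/2) * (Q * (t₁ - t) + 1) ^ (-(1/2:ℝ) - 1)) *
          Real.exp (-(Q * (Real.log x) ^ 2) / (2 * (Q * (t₁ - t) + 1))) +
        (Q * (t₁ - t) + 1) ^ (-(1/2:ℝ)) *
          (Real.exp (-(Q * (Real.log x) ^ 2) / (2 * (Q * (t₁ - t) + 1))) *
            ((0 * (2 * (Q * (t₁ - t) + 1)) - -(Q * (Real.log x) ^ 2) * (2 * -Q)) /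
              (2 * (Q * (t₁ - t) + 1)) ^ 2))) t := by
  have hA : HasDerivAt (fun s : ℝ => Q * (t₁ - s) + 1) (-Q) t := by
    have := (((hasDerivAt_id t).const_sub t₁).const_mul Q).add_const 1
    convert this using 1; rfl; rfl; rfl; ring
  have hrpow := hA.rpow_const (p := -(1/2:ℝ)) (Or.inl ha.ne')
  have hden := hA.const_mul (2:ℝ)
  have h2a : (2:ℝ) * (Q * (t₁ - t) + 1) ≠ 0 := by positivity
  have hinner := (hasDerivAt_const t (-(Q * (Real.log x) ^ 2))).div hden h2a
  exact hrpow.mul hinner.exp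

/-- `ψ(t,x) = (Q(t₁-t)+1)^{-1/2} exp(-Q(log x)²/(2(Q(t₁-t)+1)))` satisfies the linear
backward equation `∂ₜψ + (x/2)∂ₓψ + (1/2)x² ∂ₓₓψ = 0` of the geometric Brownian motion
control problem for all `t ≤ t₁`, `x > 0`, with boundary condition
`ψ(t₁,x) = exp(-(Q/2)(log x)²)`. -/
theorem gbm_linear_backward (Q t₁ : ℝ) (hQ : 0 < Q) :
    ∀ t ≤ t₁, ∀ x > 0,
      (deriv (fun s => gbmPsi Q t₁ (s, x)) t +
          (x / 2) * deriv (fun y => gbmPsi Q t₁ (t, y)) x +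
          (1 / 2 : ℝ) * x ^ 2 * deriv (deriv (fun y => gbmPsi Q t₁ (t, y))) x = 0) ∧
      gbmPsi Q t₁ (t₁, x) = Real.exp (-(Q / 2) * (Real.log x) ^ 2) := by
  intro t ht x hx
  have ha : 0 < Q * (t₁ - t) + 1 := by nlinarith
  have hx0 : x ≠ 0 := hx.ne'
  constructor
  · -- abbreviations
    set a : ℝ := Q * (t₁ - t) + 1 with ha_def
    set L : ℝ := Real.log x with hL
    -- first x-derivative as a function on (0,∞)
    have hderiv_eq : deriv (fun y => gbmPsi Q t₁ (t, y)) =ᶠ[nhds x]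
        (fun y => gbmPsi Q t₁ (t, y) * (-(Q * Real.log y) / (a * y))) := by
      filter_upwards [Ioi_mem_nhds hx] with y hy
      exact (gbm_psi_x Q t₁ t ha hy).deriv
    -- derivative of the auxiliary factor h
    have hlog := Real.hasDerivAt_log hx0
    have hnum : HasDerivAt (fun y : ℝ => -(Q * Real.log y)) (-(Q * x⁻¹)) x :=
      (hlog.const_mul Q).neg
    have hden : HasDerivAt (fun y : ℝ => a * y) (a * 1) x := (hasDerivAt_id x).const_mul a
    have hax : a * x ≠ 0 := by positivity
    have hh : HasDerivAt (fun y : ℝ => -(Q * Real.log y) / (a * y))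
        ((-(Q * x⁻¹) * (a * x) - -(Q * L) * (a * 1)) / (a * x) ^ 2) x := hnum.div hden hax
    have hf := gbm_psi_x Q t₁ t ha hx
    have hg := hf.mul hh
    -- second derivative
    have hdd : deriv (deriv (fun y => gbmPsi Q t₁ (t, y))) x =
        (gbmPsi Q t₁ (t, x) * (-(Q * L) / (a * x))) * (-(Q * L) / (a * x)) +
          gbmPsi Q t₁ (t, x) * ((-(Q * x⁻¹) * (a * x) - -(Q * L) * (a * 1)) / (a * x) ^ 2) := by
      rw [hderiv_eq.deriv_eq]
      exact hg.deriv
    rw [hdd, (gbm_psi_t Q t₁ t x ha).deriv, hf.deriv]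
    have hpsi : gbmPsi Q t₁ (t, x) =
        a ^ (-(1/2:ℝ)) * Real.exp (-(Q * L ^ 2) / (2 * a)) := rfl
    have hrw : a ^ (-(1/2:ℝ) - 1) = a ^ (-(1/2:ℝ)) / a := by
      rw [Real.rpow_sub ha, Real.rpow_one]
    rw [hpsi, hrw]
    set P : ℝ := a ^ (-(1/2:ℝ))
    set E : ℝ := Real.exp (-(Q * L ^ 2) / (2 * a))
    rw [← ha_def, ← hL]
    field_simp
    ring
  · simp only [gbmPsi]
    rw [show Q * (t₁ - t₁) + 1 = 1 by ring, Real.one_rpow, one_mul]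
    congr 1
    ring
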